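/- Let k ≥ 1 and let Ḡ ⊆ ℝ^k be the set of all λ ∈ ℝ^k such that λ₁ ≤ λ₂ ≤ ⋯ ≤ λ_k ≤ λ₁ + 2π and at most one coordinate of λ is not an integer multiple of π. Then the interior of the convex hull of Ḡ equals {λ ∈ ℝ^k : λ₁ < λ₂ < ⋯ < λ_k < λ₁ + 2π}. -/

import Mathlib

open Finset

namespace IntConvHull

noncomputable section

def S (n : ℕ) : Set (Fin (n+1) → ℝ) :=
  {lam | Monotone lam ∧ lam (Fin.last n) ≤ lam 0 + 2 * Real.pi ∧
    {i : Fin (n+1) | ¬∃ m : ℤ, lam i = m * Real.pi}.Subsingleton}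

def C (n : ℕ) : Set (Fin (n+1) → ℝ) :=
  {lam | Monotone lam ∧ lam (Fin.last n) ≤ lam 0 + 2 * Real.pi}

def O (n : ℕ) : Set (Fin (n+1) → ℝ) :=
  {lam | StrictMono lam ∧ lam (Fin.last n) < lam 0 + 2 * Real.pi}

lemma S_subset_C (n : ℕ) : S n ⊆ C n := fun lam h => ⟨h.1, h.2.1⟩

lemma convex_C (n : ℕ) : Convex ℝ (C n) := by
  intro x hx y hy a b ha hb hab
  constructor
  · intro i j hij
    simp only [Pi.add_apply, Pi.smul_apply, smul_eq_mul]
    have h1 := hx.1 hij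
    have h2 := hy.1 hij
    nlinarith
  · simp only [Pi.add_apply, Pi.smul_apply, smul_eq_mul]
    have h1 := hx.2
    have h2 := hy.2
    calc a * x (Fin.last n) + b * y (Fin.last n)
        ≤ a * (x 0 + 2 * Real.pi) + b * (y 0 + 2 * Real.pi) :=
          add_le_add (mul_le_mul_of_nonneg_left h1 ha) (mul_le_mul_of_nonneg_left h2 hb)
      _ = a * x 0 + b * y 0 + (a + b) * (2 * Real.pi) := by ring
      _ = a * x 0 + b * y 0 + 2 * Real.pi := by rw [hab]; ring

lemma isOpen_O (n : ℕ) : IsOpen (O n) := by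
  have h1 : O n = (⋂ p : Fin (n+1) × Fin (n+1),
      {lam : Fin (n+1) → ℝ | p.1 < p.2 → lam p.1 < lam p.2}) ∩
      {lam : Fin (n+1) → ℝ | lam (Fin.last n) < lam 0 + 2 * Real.pi} := by
    ext lam
    simp only [O, Set.mem_setOf_eq, Set.mem_inter_iff, Set.mem_iInter, Prod.forall]
    exact and_congr_left fun _ => ⟨fun h a b hab => h hab, fun h a b hab => h a b hab⟩
  rw [h1]
  refine IsOpen.inter (isOpen_iInter_of_finite fun p => ?_)
    (isOpen_lt (continuous_apply _) ((continuous_apply _).add continuous_const))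
  by_cases h : p.1 < p.2
  · simp only [h, forall_true_left]
    exact isOpen_lt (continuous_apply _) (continuous_apply _)
  · simp only [h]
    simp

lemma O_subset_C (n : ℕ) : O n ⊆ C n := fun lam h => ⟨h.1.monotone, h.2.le⟩

lemma interior_C_subset (n : ℕ) : interior (C n) ⊆ O n := by
  intro lam hlam
  have hC : lam ∈ C n := interior_subset hlam
  obtain ⟨ε, hε, hball⟩ := Metric.mem_nhds_iff.mp (mem_interior_iff_mem_nhds.mp hlam)
  constructor
  · intro a b hab
    rcases lt_or_eq_of_le (hC.1 hab.le) with h | h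
    · exact h
    exfalso
    set lam' := Function.update lam b (lam b - ε/2) with hl
    have hmem : lam' ∈ Metric.ball lam ε := by
      rw [Metric.mem_ball, dist_pi_lt_iff hε]
      intro c
      by_cases hc : c = b
      · subst hc
        simp only [hl, Function.update_self, Real.dist_eq]
        rw [abs_of_nonpos (by linarith)]
        linarith
      · simp [hl, Function.update_of_ne hc, hε]
    have h2 := (hball hmem).1 hab.le
    rw [hl, Function.update_of_ne hab.ne, Function.update_self] at h2
    linarith
  · rcases lt_or_eq_of_le hC.2 with h | h
    · exact h
    exfalso
    by_cases hn : n = 0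
    · subst hn
      have : Fin.last 0 = (0 : Fin 1) := rfl
      rw [this] at h
      linarith [Real.pi_pos]
    · set lam' := Function.update lam (Fin.last n) (lam (Fin.last n) + ε/2) with hl
      have hne : (0 : Fin (n+1)) ≠ Fin.last n := by
        simp [Fin.ext_iff, Fin.last]
        omega
      have hmem : lam' ∈ Metric.ball lam ε := by
        rw [Metric.mem_ball, dist_pi_lt_iff hε]
        intro c
        by_cases hc : c = Fin.last n
        · subst hc
          simp only [hl, Function.update_self, Real.dist_eq]
          rw [abs_of_nonneg (by linarith)]
          linarith
        · simp [hl, Function.update_of_ne hc, hε]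
      have h2 := (hball hmem).2
      rw [hl, Function.update_self, Function.update_of_ne hne] at h2
      linarith

lemma C_subset_hull (n : ℕ) : C n ⊆ convexHull ℝ (S n) := by
  rintro lam ⟨hmono, hub⟩
  have hπ : (0:ℝ) < Real.pi := Real.pi_pos
  set m : ℤ := ⌊lam 0 / Real.pi⌋ with hm
  set s : ℝ := Int.fract (lam 0 / Real.pi) with hsdef
  have hs0 : 0 ≤ s := Int.fract_nonneg _
  have hs1 : s < 1 := Int.fract_lt_one _
  have hlam0 : lam 0 = m * Real.pi + s * Real.pi := by
    have h := Int.floor_add_fract (lam 0 / Real.pi)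
    have h2 : ((m:ℝ) + s) * Real.pi = lam 0 / Real.pi * Real.pi := congrArg (· * Real.pi) h
    rw [div_mul_cancel₀ _ (ne_of_gt hπ)] at h2
    rw [← h2]
    ring
  -- the extension of lam to ℕ
  set g : ℕ → ℝ := fun j => lam ⟨min j n, by omega⟩ with hg
  have hgi : ∀ i : Fin (n+1), g (i : ℕ) = lam i := by
    intro i
    have : min (i : ℕ) n = (i : ℕ) := min_eq_left (Nat.lt_succ_iff.mp i.isLt)
    simp only [hg]
    congr 1
    exact Fin.ext this
  have hg0 : g 0 = lam 0 := hgi 0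
  have hgn : g n = lam (Fin.last n) := hgi (Fin.last n)
  have hgmono : ∀ j j' : ℕ, j ≤ j' → g j ≤ g j' := by
    intro j j' hjj
    exact hmono (by simp [Fin.mk_le_mk]; omega)
  -- the weights
  set t : ℕ → ℝ := fun j => if j = 0 then 1 - (g n - g 0) / (2 * Real.pi)
    else (g j - g (j-1)) / (2 * Real.pi) with ht
  set z : ℕ × Bool → (Fin (n+1) → ℝ) := fun p i =>
    (m : ℝ) * Real.pi + (if p.2 then Real.pi else 0) +
      (if 1 ≤ p.1 ∧ p.1 ≤ (i : ℕ) then 2 * Real.pi else 0) with hz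
  set w : ℕ × Bool → ℝ := fun p => t p.1 * (if p.2 then s else 1 - s) with hw
  set T : Finset (ℕ × Bool) := Finset.range (n+1) ×ˢ Finset.univ with hT
  have htnonneg : ∀ j, 0 ≤ t j := by
    intro j
    simp only [ht]
    by_cases hj : j = 0
    · rw [if_pos hj, hg0, hgn]
      have : (lam (Fin.last n) - lam 0) / (2 * Real.pi) ≤ 1 := by
        rw [div_le_one (by linarith)]
        linarith
      linarith
    · rw [if_neg hj]
      have := hgmono (j-1) j (by omega)
      apply div_nonneg (by linarith) (by linarith)
  have hsum_t : ∑ j ∈ Finset.range (n+1), t j = 1 := by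
    rw [Finset.sum_range_succ']
    have h1 : ∀ j ∈ Finset.range n, t (j+1) = (g (j+1) - g j) / (2 * Real.pi) := by
      intro j _
      simp [ht]
    rw [Finset.sum_congr rfl h1, ← Finset.sum_div, Finset.sum_range_sub]
    simp only [ht, if_pos rfl]
    ring
  have hsum_tA : ∀ i : Fin (n+1),
      ∑ j ∈ Finset.range (n+1), t j * (if 1 ≤ j ∧ j ≤ (i:ℕ) then 2 * Real.pi else 0)
        = lam i - lam 0 := by
    intro i
    rw [Finset.sum_range_succ']
    have h0 : t 0 * (if 1 ≤ 0 ∧ 0 ≤ (i:ℕ) then 2 * Real.pi else 0) = 0 := by simp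
    rw [h0, add_zero]
    have h1 : ∀ j ∈ Finset.range n,
        t (j+1) * (if 1 ≤ j+1 ∧ j+1 ≤ (i:ℕ) then 2 * Real.pi else 0)
          = if j < (i:ℕ) then g (j+1) - g j else 0 := by
      intro j _
      by_cases hji : j < (i:ℕ)
      · rw [if_pos hji, if_pos ⟨by omega, by omega⟩]
        simp only [ht, if_neg (Nat.succ_ne_zero j), Nat.add_sub_cancel]
        field_simp
      · rw [if_neg hji, if_neg (by omega), mul_zero]
    rw [Finset.sum_congr rfl h1]
    have hin : (i : ℕ) ≤ n := Nat.lt_succ_iff.mp i.isLt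
    have h2 : ∑ j ∈ Finset.range n, (if j < (i:ℕ) then g (j+1) - g j else 0)
        = ∑ j ∈ Finset.range (i:ℕ), (if j < (i:ℕ) then g (j+1) - g j else 0) := by
      refine (Finset.sum_subset (Finset.range_subset_range.mpr hin) ?_).symm
      intro x _ hx
      rw [Finset.mem_range] at hx
      rw [if_neg (by omega)]
    rw [h2, Finset.sum_congr rfl (fun j hj => if_pos (Finset.mem_range.mp hj)),
      Finset.sum_range_sub]
    rw [hg0, hgi i]
  have hwnonneg : ∀ p ∈ T, 0 ≤ w p := by
    intro p _
    rw [hw]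
    refine mul_nonneg (htnonneg p.1) ?_
    by_cases hb : p.2 <;> simp [hb] <;> linarith
  have hwsum : ∑ p ∈ T, w p = 1 := by
    rw [hT, Finset.sum_product]
    have : ∀ j ∈ Finset.range (n+1), ∑ b : Bool, w (j, b) = t j := by
      intro j _
      rw [Fintype.sum_bool]
      simp only [hw]
      simp
      ring
    rw [Finset.sum_congr rfl this, hsum_t]
  have hzS : ∀ p ∈ T, z p ∈ S n := by
    intro p _
    refine ⟨?_, ?_, ?_⟩
    · intro i i' hii
      have hii' : (i:ℕ) ≤ (i':ℕ) := hii
      simp only [hz]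
      refine add_le_add_right ?_ _
      split_ifs with h1 h2 h3
      · exact le_rfl
      · exact absurd ⟨h1.1, h1.2.trans hii'⟩ h2
      · linarith
      · exact le_rfl
    · simp only [hz]
      split_ifs <;> linarith
    · intro i hi
      exfalso
      apply hi
      refine ⟨m + (if p.2 then 1 else 0) + (if 1 ≤ p.1 ∧ p.1 ≤ (i:ℕ) then 2 else 0), ?_⟩
      simp only [hz]
      split_ifs <;> push_cast <;> ring
  have hsum_z : ∑ p ∈ T, w p • z p = lam := by
    funext i
    rw [Finset.sum_apply, hT, Finset.sum_product]
    have hinner : ∀ j ∈ Finset.range (n+1),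
        (∑ b : Bool, (w (j, b) • z (j, b)) i)
          = t j * lam 0 + t j * (if 1 ≤ j ∧ j ≤ (i:ℕ) then 2 * Real.pi else 0) := by
      intro j _
      rw [Fintype.sum_bool]
      simp only [hw, hz, Pi.smul_apply, smul_eq_mul]
      rw [hlam0]
      simp only [if_true, Bool.false_eq_true, if_false]
      ring
    rw [Finset.sum_congr rfl hinner, Finset.sum_add_distrib, ← Finset.sum_mul, hsum_t,
      hsum_tA i]
    ring
  rw [← hsum_z]
  exact (convex_convexHull ℝ (S n)).sum_mem hwnonneg hwsum
    (fun p hp => subset_convexHull ℝ _ (hzS p hp))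

end

end IntConvHull


/-- The interior of the convex hull of the (closure of the) graph `G₂^k` — points `λ` with
`λ₁ ≤ ⋯ ≤ λ_k ≤ λ₁ + 2π` all but at most one of whose coordinates lie in `πℤ` — is the open
region `{λ : λ₁ < ⋯ < λ_k < λ₁ + 2π}`. -/
theorem interior_convexHull_graph (k : ℕ) (hk : 1 ≤ k) :
    interior (convexHull ℝ
      {lam : Fin k → ℝ | Monotone lam ∧
        lam ⟨k - 1, by omega⟩ ≤ lam ⟨0, by omega⟩ + 2 * Real.pi ∧
        {i : Fin k | ¬∃ n : ℤ, lam i = n * Real.pi}.Subsingleton}) =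
    {lam : Fin k → ℝ | StrictMono lam ∧
      lam ⟨k - 1, by omega⟩ < lam ⟨0, by omega⟩ + 2 * Real.pi} := by
  obtain ⟨n, rfl⟩ : ∃ n, k = n + 1 := ⟨k - 1, by omega⟩
  show interior (convexHull ℝ (IntConvHull.S n)) = IntConvHull.O n
  have hull_eq : convexHull ℝ (IntConvHull.S n) = IntConvHull.C n :=
    subset_antisymm
      (convexHull_min (IntConvHull.S_subset_C n) (IntConvHull.convex_C n))
      (IntConvHull.C_subset_hull n)
  rw [hull_eq]
  exact subset_antisymm (IntConvHull.interior_C_subset n)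
    (interior_maximal (IntConvHull.O_subset_C n) (IntConvHull.isOpen_O n))
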